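/- Let G be a group with central subgroup N ≅ ℤ such that G/N has exponent n and G is torsion-free. If α is a nontrivial generalized torsion element of G, then αⁿ is not a generalized torsion element of G. In particular, the set of generalized torsion elements of such a group need not be closed under taking powers. -/

import Mathlib

/-- `g` is a generalized torsion element of `G`: some nonempty finite product of
conjugates of `g` equals the identity. -/
def IsGenTorsion {G : Type*} [Group G] (g : G) : Prop :=
  ∃ xs : List G, xs ≠ [] ∧ (xs.map (fun x => x⁻¹ * g * x)).prod = 1

theorem pow_not_genTorsion_adyan {G : Type*} [Group G]
    (N : Subgroup G) (hNc : N ≤ Subgroup.center G)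
    (hNiso : Nonempty (N ≃* Multiplicative ℤ))
    (n : ℕ) (hn : 0 < n) (hexp : ∀ g : G, g ^ n ∈ N)
    (htf : ∀ g : G, IsOfFinOrder g → g = 1)
    (α : G) (hα1 : α ≠ 1) (hα : IsGenTorsion α) :
    ¬ IsGenTorsion (α ^ n) := by
  rintro ⟨xs, hne, hprod⟩
  have hcen : α ^ n ∈ Subgroup.center G := hNc (hexp α)
  have hconj : ∀ x : G, x⁻¹ * α ^ n * x = α ^ n := by
    intro x
    have h := (Subgroup.mem_center_iff.mp hcen) x
    calc x⁻¹ * α ^ n * x = x⁻¹ * (x * α ^ n) := by rw [h]; group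
    _ = α ^ n := by group
  have hmap : xs.map (fun x => x⁻¹ * α ^ n * x) = List.replicate xs.length (α ^ n) := by
    simp only [hconj]
    exact List.map_const'
  rw [hmap, List.prod_replicate] at hprod
  have hlen : xs.length ≠ 0 := fun h => hne (List.length_eq_zero_iff.mp h)
  have hfin : IsOfFinOrder (α ^ n) := isOfFinOrder_iff_pow_eq_one.mpr ⟨xs.length, Nat.pos_of_ne_zero hlen, hprod⟩
  have h1 : α ^ n = 1 := htf _ hfin
  have : IsOfFinOrder α := isOfFinOrder_iff_pow_eq_one.mpr ⟨n, hn, h1⟩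
  exact hα1 (htf _ this)
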